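/- Let f be a transcendental entire function, let m > 1, and suppose there exist r_0 > 0 with M(r) > r for all r ≥ r_0, and a real function ψ defined on [r_0, ∞) such that ψ(r) ≥ r and M(ψ(r)) ≥ (ψ(M(r)))^m for all r ≥ r_0. Then f is ε-regular with ε = 1/m. -/

import Mathlib

open Set Filter

/-- The maximum modulus of `f` on the circle of radius `r`. -/
noncomputable def maxMod (f : ℂ → ℂ) (r : ℝ) : ℝ :=
  sSup ((fun z => ‖f z‖) '' {z : ℂ | ‖z‖ = r})

/-- The minimum modulus of `f` on the circle of radius `r`. -/
noncomputable def minMod (f : ℂ → ℂ) (r : ℝ) : ℝ :=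
  sInf ((fun z => ‖f z‖) '' {z : ℂ | ‖z‖ = r})

/-- `f` is a transcendental entire function: entire and not a polynomial. -/
def TranscendentalEntire (f : ℂ → ℂ) : Prop :=
  Differentiable ℂ f ∧ ¬ ∃ p : Polynomial ℂ, ∀ z, f z = p.eval z

/-- `μ_ε(r) = M(r)^ε`. -/
noncomputable def muEps (f : ℂ → ℂ) (ε : ℝ) (r : ℝ) : ℝ := (maxMod f r) ^ ε

/-- The fast escaping set `A(f)`. -/
def fastEscaping (f : ℂ → ℂ) : Set ℂ :=
  {z : ℂ | ∀ R : ℝ, 0 < R → (∀ r ≥ R, r < maxMod f r) →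
    ∃ ℓ : ℕ, ∀ n : ℕ, (maxMod f)^[n] R ≤ ‖f^[n + ℓ] z‖}

/-- The set `Q_ε(f)`. -/
def Qeps (f : ℂ → ℂ) (ε : ℝ) : Set ℂ :=
  {z : ℂ | ∀ R : ℝ, 0 < R → (∀ r ≥ R, r < muEps f ε r) →
    ∃ ℓ : ℕ, ∀ n : ℕ, (muEps f ε)^[n] R ≤ ‖f^[n + ℓ] z‖}

/-- The quite fast escaping set `Q(f) = ⋃_{0<ε<1} Q_ε(f)`. -/
def Qset (f : ℂ → ℂ) : Set ℂ := ⋃ ε ∈ Ioo (0:ℝ) 1, Qeps f ε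

/-- `f` is `ε`-regular. -/
def epsRegular (f : ℂ → ℂ) (ε : ℝ) : Prop :=
  ∀ R : ℝ, 0 < R → (∀ r ≥ R, r < maxMod f r) →
    ∃ r : ℝ, 0 < r ∧ ∀ n : ℕ, (maxMod f)^[n] R ≤ (muEps f ε)^[n] r

/-- `f` is weakly regular: `ε`-regular for every `ε ∈ (0,1)`. -/
def weaklyRegular (f : ℂ → ℂ) : Prop := ∀ ε ∈ Ioo (0:ℝ) 1, epsRegular f ε

/-- `f` is log-regular (characterization from Corollary 4.3). -/
def logRegular (f : ℂ → ℂ) : Prop :=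
  ∃ r₁ > (1:ℝ), ∃ k > (1:ℝ), ∃ d > (1:ℝ), ∀ r ≥ r₁,
    (maxMod f r) ^ (k * d) ≤ maxMod f (r ^ k)


lemma maxMod_nonneg' (f : ℂ → ℂ) (r : ℝ) : 0 ≤ maxMod f r :=
  Real.sSup_nonneg (by rintro x ⟨z, _, rfl⟩; exact norm_nonneg _)

lemma le_maxMod' (f : ℂ → ℂ) (hf : Differentiable ℂ f) {z : ℂ} {r : ℝ}
    (hz : ‖z‖ = r) : ‖f z‖ ≤ maxMod f r := by
  have hbdd : BddAbove ((fun z => ‖f z‖) '' {z : ℂ | ‖z‖ = r}) := by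
    have : {z : ℂ | ‖z‖ = r} = Metric.sphere 0 r := by
      ext w; simp [Complex.dist_eq]
    rw [this]
    exact ((isCompact_sphere 0 r).image (continuous_norm.comp hf.continuous)).bddAbove
  exact le_csSup hbdd ⟨z, hz, rfl⟩

lemma maxMod_mono' (f : ℂ → ℂ) (hf : Differentiable ℂ f) {a b : ℝ} (ha : 0 ≤ a)
    (hab : a ≤ b) : maxMod f a ≤ maxMod f b := by
  apply Real.sSup_le _ (maxMod_nonneg' f b)
  rintro x ⟨z, hz, rfl⟩
  rcases eq_or_lt_of_le (ha.trans hab) with hb | hb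
  · have : a = b := le_antisymm hab (hb ▸ ha)
    exact le_maxMod' f hf (hz.trans this)
  · have hcl : z ∈ closure (Metric.ball (0:ℂ) b) := by
      rw [closure_ball 0 hb.ne']
      rw [Metric.mem_closedBall, Complex.dist_eq, sub_zero, hz]; exact hab
    refine Complex.norm_le_of_forall_mem_frontier_norm_le Metric.isBounded_ball
      hf.diffContOnCl (fun w hw => ?_) hcl
    rw [frontier_ball 0 hb.ne'] at hw
    exact le_maxMod' f hf (by simpa [Complex.dist_eq] using hw)

theorem stmt_12 (f : ℂ → ℂ) (hf : TranscendentalEntire f) (m : ℝ) (hm : 1 < m)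
    (r₀ : ℝ) (hr₀ : 0 < r₀) (hM : ∀ r ≥ r₀, r < maxMod f r) (ψ : ℝ → ℝ)
    (hψ : ∀ r ≥ r₀, r ≤ ψ r ∧ (ψ (maxMod f r)) ^ m ≤ maxMod f (ψ r)) :
    epsRegular f (1 / m) := by
  obtain ⟨hdiff, -⟩ := hf
  intro R hR hMR
  set R' := max R r₀ with hR'def
  have hR'r₀ : r₀ ≤ R' := le_max_right _ _
  have hR'R : R ≤ R' := le_max_left _ _
  have hR'pos : 0 < R' := lt_of_lt_of_le hr₀ hR'r₀
  have hm0 : (0:ℝ) < m := lt_trans one_pos hm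
  have hMn' : ∀ n, r₀ ≤ (maxMod f)^[n] R' := by
    intro n; induction n with
    | zero => simpa using hR'r₀
    | succ n ih =>
      rw [Function.iterate_succ_apply']
      exact le_of_lt (lt_of_le_of_lt ih (hM _ ih))
  have hMnR : ∀ n, R ≤ (maxMod f)^[n] R := by
    intro n; induction n with
    | zero => simp
    | succ n ih =>
      rw [Function.iterate_succ_apply']
      exact le_of_lt (lt_of_le_of_lt ih (hMR _ ih))
  have hmono : ∀ n, (maxMod f)^[n] R ≤ (maxMod f)^[n] R' := by
    intro n; induction n with
    | zero => simpa using hR'R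
    | succ n ih =>
      rw [Function.iterate_succ_apply', Function.iterate_succ_apply']
      exact maxMod_mono' f hdiff (le_trans hR.le (hMnR n)) ih
  have hψR'pos : 0 < ψ R' := lt_of_lt_of_le hR'pos (hψ R' hR'r₀).1
  refine ⟨ψ R', hψR'pos, fun n => ?_⟩
  have key : ∀ n, ψ ((maxMod f)^[n] R') ≤ (muEps f (1/m))^[n] (ψ R') := by
    intro k; induction k with
    | zero => simp
    | succ k ih =>
      set a := (maxMod f)^[k] R' with ha
      have h1 : r₀ ≤ a := hMn' k
      have hψ1 := hψ a h1
      have hMa : r₀ ≤ maxMod f a := by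
        have := hMn' (k + 1)
        rwa [Function.iterate_succ_apply'] at this
      have hψ2 := hψ (maxMod f a) hMa
      have hxpos : 0 < ψ (maxMod f a) := lt_of_lt_of_le hr₀ (le_trans hMa hψ2.1)
      have hapos : 0 < ψ a := lt_of_lt_of_le hr₀ (le_trans h1 hψ1.1)
      rw [Function.iterate_succ_apply', Function.iterate_succ_apply']
      have step1 : ψ (maxMod f a) ≤ muEps f (1/m) (ψ a) := by
        unfold muEps
        calc ψ (maxMod f a) = ((ψ (maxMod f a)) ^ m) ^ (1/m) := by
              rw [← Real.rpow_mul hxpos.le, mul_one_div_cancel hm0.ne', Real.rpow_one]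
          _ ≤ (maxMod f (ψ a)) ^ (1/m) :=
              Real.rpow_le_rpow (Real.rpow_nonneg hxpos.le m) hψ1.2
                (by positivity)
      have step2 : muEps f (1/m) (ψ a) ≤ muEps f (1/m) ((muEps f (1/m))^[k] (ψ R')) := by
        unfold muEps
        exact Real.rpow_le_rpow (maxMod_nonneg' f _)
          (maxMod_mono' f hdiff hapos.le ih) (by positivity)
      exact le_trans step1 step2
  calc (maxMod f)^[n] R ≤ (maxMod f)^[n] R' := hmono n
    _ ≤ ψ ((maxMod f)^[n] R') := (hψ _ (hMn' n)).1
    _ ≤ (muEps f (1/m))^[n] (ψ R') := key n
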